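/- Let H be a real inner product space, let z : H → ℝ, y ∈ {−1, 1}, and θ ∈ H, and suppose z has gradient g at θ. Write m(θ') = y·z(θ') and suppose m is β-smooth in the sense that for all Δ ∈ H: m(θ + Δ) ≥ m(θ) + ⟪y·g, Δ⟫ − (β/2)·‖Δ‖², with β > 0. Let η ≥ 0 and set Δ = η·( y / (1 + exp(m(θ))) )·g (the SGD step on the logistic loss). Then m(θ + Δ) − m(θ) ≥ η·( ‖g‖² / (1 + exp(m(θ))) )·( 1 − β·η / (2·(1 + exp(m(θ)))) ). -/

import Mathlib

open scoped RealInnerProductSpace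

/-- Bag-wise margin expansion under `β`-smoothness: if the signed margin
`m(θ') = y·z(θ')` satisfies `m(θ+Δ) ≥ m(θ) + ⟪y·g, Δ⟫ − (β/2)·‖Δ‖²` for all
`Δ` (with `g` the gradient of `z` at `θ`, `β > 0`), then the SGD step
`Δ = η·(y/(1+exp(m(θ))))·g` with `η ≥ 0` yields
`m(θ+Δ) − m(θ) ≥ η·(‖g‖²/(1+exp(m(θ))))·(1 − β·η/(2·(1+exp(m(θ)))))`. -/
theorem stmt8 {H : Type*} [NormedAddCommGroup H] [InnerProductSpace ℝ H]
    (z : H → ℝ) (θ g : H) (y : ℝ) (hy : y = -1 ∨ y = 1)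
    (β : ℝ) (hβ : 0 < β)
    (hsmooth : ∀ Δ : H,
      y * z (θ + Δ) ≥ y * z θ + ⟪y • g, Δ⟫ - (β / 2) * ‖Δ‖ ^ 2)
    (η : ℝ) (hη : 0 ≤ η)
    (Δ : H) (hΔ : Δ = η • ((y / (1 + Real.exp (y * z θ))) • g)) :
    y * z (θ + Δ) - y * z θ ≥
      η * (‖g‖ ^ 2 / (1 + Real.exp (y * z θ))) *
        (1 - β * η / (2 * (1 + Real.exp (y * z θ)))) := by
  set E := 1 + Real.exp (y * z θ) with hE
  have hEpos : 0 < E := by positivity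
  have hy2 : y * y = 1 := by rcases hy with h | h <;> simp [h]
  have key := hsmooth Δ
  have hinner : ⟪y • g, Δ⟫ = η * (‖g‖ ^ 2 / E) := by
    rw [hΔ, real_inner_smul_left, real_inner_smul_right, real_inner_smul_right,
      real_inner_self_eq_norm_sq]
    field_simp
    calc y ^ 2 * η * ‖g‖ ^ 2 = (y * y) * (η * ‖g‖ ^ 2) := by ring
      _ = η * ‖g‖ ^ 2 := by rw [hy2, one_mul]
  have hnorm : ‖Δ‖ ^ 2 = η ^ 2 * (‖g‖ ^ 2 / E ^ 2) := by
    rw [hΔ, norm_smul, norm_smul, mul_pow, mul_pow]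
    rw [Real.norm_eq_abs, Real.norm_eq_abs, sq_abs, sq_abs, div_pow]
    have : y ^ 2 = 1 := by rcases hy with h | h <;> simp [h]
    field_simp [this]
    rw [this, mul_one]
  have : y * z (θ + Δ) - y * z θ ≥ η * (‖g‖ ^ 2 / E) - (β / 2) * (η ^ 2 * (‖g‖ ^ 2 / E ^ 2)) := by
    rw [← hinner, ← hnorm]; linarith
  refine le_trans (le_of_eq ?_) this
  field_simp
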